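/- Let W ≥ 1 be a real number, let d be a natural number, and define G(t) = T_d(2t/W + 1). Then G(t) ∈ [−1, 1] for all t ∈ [−W, 0], and if additionally d ≥ √W, then G(t) ≥ 2 for all t ≥ 1. -/

import Mathlib

open Real

private lemma sinh_nn {u : ℝ} (hu : 0 ≤ u) : 0 ≤ Real.sinh u := by
  rw [← Real.sinh_zero]; exact Real.sinh_le_sinh.mpr hu

private lemma T_real_cosh (s : ℝ) (n : ℤ) :
    (Polynomial.Chebyshev.T ℝ n).eval (Real.cosh s) = Real.cosh (n * s) := by
  have h := Polynomial.Chebyshev.T_complex_cos ((s : ℂ) * Complex.I) n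
  rw [Complex.cos_mul_I] at h
  have h2 : (n : ℂ) * ((s : ℂ) * Complex.I) = ((n * s : ℝ) : ℂ) * Complex.I := by
    push_cast; ring
  rw [h2, Complex.cos_mul_I] at h
  have := Polynomial.Chebyshev.complex_ofReal_eval_T (Real.cosh s) n
  rw [Complex.ofReal_cosh, h, ← Complex.ofReal_cosh] at this
  exact_mod_cast this

private lemma sinh_le_mul_cosh {u : ℝ} (hu : 0 ≤ u) : Real.sinh u ≤ u * Real.cosh u := by
  have key : MonotoneOn (fun x : ℝ => x * Real.cosh x - Real.sinh x) (Set.Ici 0) := by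
    apply monotoneOn_of_deriv_nonneg (convex_Ici 0)
    · exact (Continuous.sub (continuous_id.mul Real.continuous_cosh)
        Real.continuous_sinh).continuousOn
    · intro x hx
      exact (Differentiable.differentiableAt (by fun_prop)).differentiableWithinAt
    · intro x hx
      rw [interior_Ici] at hx
      have hd : HasDerivAt (fun x : ℝ => x * Real.cosh x - Real.sinh x)
          (x * Real.sinh x) x := by
        have := ((hasDerivAt_id x).mul (Real.hasDerivAt_cosh x)).sub (Real.hasDerivAt_sinh x)
        refine this.congr_deriv ?_
        simp only [id_eq]; ring
      rw [hd.deriv]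
      exact mul_nonneg hx.le (sinh_nn hx.le)
  have := key (Set.self_mem_Ici) (Set.mem_Ici.mpr hu) hu
  simpa using this

private lemma cosh_eq_double (s : ℝ) : Real.cosh s = 2 * Real.sinh (s / 2) ^ 2 + 1 := by
  have h : Real.cosh (2 * (s / 2)) = Real.cosh (s/2) ^ 2 + Real.sinh (s/2) ^ 2 :=
    Real.cosh_two_mul (s / 2)
  have h2 := Real.cosh_sq (s / 2)
  have h3 : (2 : ℝ) * (s / 2) = s := by ring
  rw [h3] at h
  linarith

/-- For `W ≥ 1` and `G(t) = T_d(2t/W + 1)`: `G(t) ∈ [-1,1]` on `[-W, 0]`, and if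
`d ≥ √W` then `G(t) ≥ 2` for all `t ≥ 1`. -/
theorem chebyshev_shifted_properties (W : ℝ) (hW : 1 ≤ W) (d : ℕ)
    (G : ℝ → ℝ) (hG : ∀ t, G t = (Polynomial.Chebyshev.T ℝ d).eval (2 * t / W + 1)) :
    (∀ t, -W ≤ t → t ≤ 0 → G t ∈ Set.Icc (-1 : ℝ) 1) ∧
      (Real.sqrt W ≤ (d : ℝ) → ∀ t, 1 ≤ t → 2 ≤ G t) := by
  have hW0 : (0 : ℝ) < W := lt_of_lt_of_le one_pos hW
  constructor
  · intro t ht1 ht2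
    set x := 2 * t / W + 1 with hx
    have h1 : -2 ≤ 2 * t / W := by
      rw [le_div_iff₀ hW0]; linarith
    have h2 : 2 * t / W ≤ 0 := by
      rw [div_le_iff₀ hW0]; linarith
    have hxlo : -1 ≤ x := by rw [hx]; linarith
    have hxhi : x ≤ 1 := by rw [hx]; linarith
    have hcos : Real.cos (Real.arccos x) = x := Real.cos_arccos hxlo hxhi
    rw [hG t, ← hx, ← hcos, Polynomial.Chebyshev.T_real_cos]
    exact ⟨Real.neg_one_le_cos _, Real.cos_le_one _⟩
  · intro hd t ht
    set x := 2 * t / W + 1 with hxdef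
    clear_value x
    have hx : 1 + 2 / W ≤ x := by
      rw [hxdef]
      have : 2 / W ≤ 2 * t / W := by gcongr; linarith
      linarith
    have hx1 : 1 < x := by
      have h0 : (0:ℝ) < 2 / W := by positivity
      linarith
    set y := x + Real.sqrt (x ^ 2 - 1) with hy
    clear_value y
    have hsq : Real.sqrt (x ^ 2 - 1) ^ 2 = x ^ 2 - 1 :=
      Real.sq_sqrt (by nlinarith)
    have hsqnn : 0 ≤ Real.sqrt (x ^ 2 - 1) := Real.sqrt_nonneg _
    have hy1 : 1 ≤ y := by rw [hy]; linarith
    have hy0 : 0 < y := by linarith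
    set s := Real.log y with hs
    clear_value s
    have hes : Real.exp s = y := by rw [hs]; exact Real.exp_log hy0
    have hmul : y * (x - Real.sqrt (x ^ 2 - 1)) = 1 := by rw [hy]; nlinarith
    have hens : Real.exp (-s) = x - Real.sqrt (x ^ 2 - 1) := by
      rw [Real.exp_neg, hes]
      exact inv_eq_of_mul_eq_one_right hmul
    have hcosh : Real.cosh s = x := by
      rw [Real.cosh_eq, hes, hens, hy]; ring
    have hs0 : 0 ≤ s := by rw [hs]; exact Real.log_nonneg hy1
    -- key bound: 4(x-1) ≤ s^2 (x+1)
    have hkey : 4 * (x - 1) ≤ s ^ 2 * (x + 1) := by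
      have h1 : Real.sinh (s / 2) ≤ (s / 2) * Real.cosh (s / 2) :=
        sinh_le_mul_cosh (by linarith)
      have h2 : Real.cosh s = 2 * Real.sinh (s / 2) ^ 2 + 1 := cosh_eq_double s
      have h3 : Real.cosh (s / 2) ^ 2 = (Real.cosh s + 1) / 2 := by
        have h := Real.cosh_two_mul (s / 2)
        have h2' := Real.cosh_sq (s / 2)
        have h3' : (2 : ℝ) * (s / 2) = s := by ring
        rw [h3'] at h
        rw [hcosh] at h
        rw [hcosh]
        linarith
      have hsh0 : 0 ≤ Real.sinh (s / 2) := sinh_nn (by linarith)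
      have h4 : Real.sinh (s / 2) ^ 2 ≤ ((s / 2) * Real.cosh (s / 2)) ^ 2 :=
        pow_le_pow_left₀ hsh0 h1 2
      rw [mul_pow, h3] at h4
      rw [hcosh] at h2
      nlinarith [sq_nonneg s]
    have hx' : W + 2 ≤ W * x := by
      rw [show W + 2 = W * (1 + 2 / W) by field_simp]
      exact mul_le_mul_of_nonneg_left hx hW0.le
    have hWx : 2 * (x + 1) ≤ W * (4 * (x - 1)) := by
      nlinarith [mul_nonneg (sub_nonneg.2 hW) (sub_nonneg.2 hx1.le)]
    have hdW : W ≤ (d : ℝ) ^ 2 := by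
      have h := Real.sq_sqrt hW0.le
      nlinarith [Real.sqrt_nonneg W]
    have hWs : 2 ≤ W * s ^ 2 := by
      have h5 := mul_le_mul_of_nonneg_left hkey hW0.le
      nlinarith
    have hds : 2 ≤ ((d : ℝ) * s) ^ 2 := by
      have h6 := mul_le_mul_of_nonneg_right hdW (sq_nonneg s)
      calc (2 : ℝ) ≤ W * s ^ 2 := hWs
        _ ≤ (d : ℝ) ^ 2 * s ^ 2 := h6
        _ = ((d : ℝ) * s) ^ 2 := by ring
    have heval : G t = Real.cosh ((d : ℝ) * s) := by
      rw [hG t, ← hxdef, ← hcosh, T_real_cosh]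
      norm_num
    rw [heval]
    clear heval hG
    have hds0 : (0:ℝ) ≤ (d : ℝ) * s := mul_nonneg (Nat.cast_nonneg d) hs0
    have h5 : (d : ℝ) * s / 2 ≤ Real.sinh ((d : ℝ) * s / 2) :=
      Real.self_le_sinh_iff.mpr (by linarith)
    have h6 := cosh_eq_double ((d : ℝ) * s)
    have h7 : ((d : ℝ) * s / 2) ^ 2 ≤ Real.sinh ((d : ℝ) * s / 2) ^ 2 :=
      pow_le_pow_left₀ (by linarith) h5 2
    have h8 : ((d : ℝ) * s / 2) ^ 2 = ((d : ℝ) * s) ^ 2 / 4 := by ring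
    linarith
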